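/- Let σ be a positive semidefinite matrix on ℂ^d ⊗ ℂ^d ⊗ ℂ^{d'} with Tr σ ≤ 1 that is invariant under exchanging the first two tensor factors, and let {A_i}_{i∈I} be a finite POVM on ℂ^d, i.e. positive semidefinite d×d matrices with Σ_{i∈I} A_i = Id. Set δ := Σ_{i≠j} Tr((A_i ⊗ A_j ⊗ Id) σ). Then ‖Σ_{i∈I} (√(A_i) ⊗ Id) Tr₂(σ) (√(A_i) ⊗ Id) − Tr₂(σ)‖₁ ≤ 2√δ + δ, where Tr₂ denotes the partial trace over the second tensor factor (so that Tr₂(σ) is a matrix on ℂ^d ⊗ ℂ^{d'}, and in the displayed expression √(A_i) acts on the first factor and Id on ℂ^{d'}). -/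

import Mathlib

open scoped Kronecker ComplexConjugate ComplexOrder Matrix

namespace MIP

noncomputable section

abbrev Mat (d : ℕ) := Matrix (Fin d) (Fin d) ℂ

/-- Real part of the trace. -/
def rTr {m : Type*} [Fintype m] (M : Matrix m m ℂ) : ℝ := M.trace.re

/-- Positive semidefinite square root (`0` if the matrix is not PSD). -/
def psqrt {m : Type*} [Fintype m] [DecidableEq m] (A : Matrix m m ℂ) : Matrix m m ℂ :=
  letI := Classical.propDecidable A.PosSemidef
  if h : A.PosSemidef then
    h.1.eigenvectorUnitary.1 * Matrix.diagonal ((↑) ∘ (√·) ∘ h.1.eigenvalues) *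
      (star h.1.eigenvectorUnitary : Matrix m m ℂ)
  else 0

/-- Loewner order `A ≤ B`. -/
def PSDle {m : Type*} [Fintype m] (A B : Matrix m m ℂ) : Prop := (B - A).PosSemidef

/-- Trace norm of a square complex matrix. -/
def traceNorm {m : Type*} [Fintype m] [DecidableEq m] (M : Matrix m m ℂ) : ℝ :=
  rTr (psqrt (Mᴴ * M))

/-- `‖X‖_ρ² = Tr (X Xᴴ ρ)`. -/
def rhoNormSq {d : ℕ} (ρ X : Mat d) : ℝ := rTr (X * Xᴴ * ρ)

/-- `⟨ψ| M 0 ⊗ ⋯ ⊗ M (r-1) |ψ⟩` (real part). -/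
def tExp {r d : ℕ} (ψ : (Fin r → Fin d) → ℂ) (M : Fin r → Mat d) : ℝ :=
  (∑ v : Fin r → Fin d, ∑ w : Fin r → Fin d,
      conj (ψ v) * (∏ i, M i (v i) (w i)) * ψ w).re

/-- `⟨ψ| M 0 ⊗ ⋯ ⊗ M (r-1) |ψ⟩` (complex value). -/
def tExpC {r d : ℕ} (ψ : (Fin r → Fin d) → ℂ) (M : Fin r → Mat d) : ℂ :=
  ∑ v : Fin r → Fin d, ∑ w : Fin r → Fin d,
      conj (ψ v) * (∏ i, M i (v i) (w i)) * ψ w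

/-- Invariance of a vector in `(ℂ^d)^{⊗r}` under all permutations of the factors. -/
def PermInvariant {r d : ℕ} (ψ : (Fin r → Fin d) → ℂ) : Prop :=
  ∀ σ : Equiv.Perm (Fin r), ∀ v, ψ (v ∘ σ) = ψ v

/-- Reduced density matrix of `|ψ⟩⟨ψ|` on register `i`. -/
def red1 {r d : ℕ} (ψ : (Fin r → Fin d) → ℂ) (i : Fin r) : Mat d :=
  Matrix.of fun j k => ∑ v : Fin r → Fin d,
    if (v i).val = 0 then ψ (Function.update v i j) * conj (ψ (Function.update v i k)) else 0

/-- Reduced density matrix of `|ψ⟩⟨ψ|` on registers `i₁, i₂`. -/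
def red2 {r d : ℕ} (ψ : (Fin r → Fin d) → ℂ) (i₁ i₂ : Fin r) :
    Matrix (Fin d × Fin d) (Fin d × Fin d) ℂ :=
  Matrix.of fun a b => ∑ v : Fin r → Fin d,
    if (v i₁).val = 0 ∧ (v i₂).val = 0 then
      ψ (Function.update (Function.update v i₁ a.1) i₂ a.2) *
        conj (ψ (Function.update (Function.update v i₁ b.1) i₂ b.2))
    else 0

/-- A symmetric projective strategy with `r` provers, questions in `F^n`,
answers in `F`, on local dimension `d`. -/
structure Strategy (r n d : ℕ) (F : Type*) [Field F] [Fintype F] where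
  ψ : (Fin r → Fin d) → ℂ
  A : (Fin n → F) → F → Mat d
  unit : ∑ v : Fin r → Fin d, Complex.normSq (ψ v) = 1
  perm : PermInvariant ψ
  herm : ∀ x a, (A x a).IsHermitian
  proj : ∀ x a, A x a * A x a = A x a
  complete : ∀ x, ∑ a : F, A x a = 1

variable {F : Type*} [Field F] [Fintype F] [DecidableEq F]

/-- Consistency-test acceptance probability. -/
def consProb {r n d : ℕ} (S : Strategy r n d F) : ℝ :=
  (∑ x : Fin n → F, ∑ a : F, tExp S.ψ fun _ => S.A x a) / (Fintype.card F : ℝ) ^ n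

/-- Linearity-test acceptance probability in direction `i`. -/
def linProbDir {r n d : ℕ} (S : Strategy r n d F) (i : Fin n) : ℝ :=
  (∑ x : Fin n → F, ∑ yi : F, ∑ zi : F,
      if yi ≠ x i ∧ zi ≠ x i ∧ yi ≠ zi then
        ∑ α : F, ∑ β : F,
          tExp S.ψ fun j =>
            if j.val = 0 then S.A x (α * x i + β)
            else if j.val = 1 then S.A (Function.update x i yi) (α * yi + β)
            else if j.val = 2 then S.A (Function.update x i zi) (α * zi + β)
            else 1
      else 0) /
    ((Fintype.card F : ℝ) ^ n * ((Fintype.card F : ℝ) - 1) * ((Fintype.card F : ℝ) - 2))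

/-- Linearity-test acceptance probability (averaged over the direction). -/
def linProb {r n d : ℕ} (S : Strategy r n d F) : ℝ :=
  (∑ i : Fin n, linProbDir S i) / n

/-- A multilinear function `F^k → F`. -/
def IsMultilinear {k : ℕ} (g : (Fin k → F) → F) : Prop :=
  ∀ (i : Fin k) (x : Fin k → F), ∃ α β : F, ∀ t : F, g (Function.update x i t) = α * t + β

/-- First `k` coordinates `x_{≤k}`. -/
def xle {n k : ℕ} (hk : k ≤ n) (x : Fin n → F) : Fin k → F :=
  fun j => x (Fin.castLE hk j)

/-- Last `n - k` coordinates `x_{>k}`. -/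
def xgt {n : ℕ} (k : ℕ) (hk : k ≤ n) (x : Fin n → F) : Fin (n - k) → F :=
  fun j => x ⟨k + j.val, by have := j.isLt; omega⟩

/-- The restriction `g(·, x_{k+1},…,x_ℓ)` of `g : F^ℓ → F` to its first `k` variables, the last
`ℓ - k` variables being substituted with the corresponding coordinates of `x ∈ F^n`. -/
def midRestrict {n k ℓ : ℕ} (hkl : k ≤ ℓ) (hl : ℓ ≤ n) (g : (Fin ℓ → F) → F) (x : Fin n → F) :
    (Fin k → F) → F :=
  fun u => g fun j =>
    if h : j.val < k then u ⟨j.val, h⟩ else x ⟨j.val, by have := j.isLt; omega⟩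

/-- A family of sub-measurements of arity `k`, with outcomes the multilinear functions
`F^k → F` (the matrices are indexed by all functions, vanishing on non-multilinear ones). -/
structure SubFamily (n d : ℕ) (F : Type*) [Field F] [Fintype F] [DecidableEq F] (k : ℕ) where
  P : (Fin (n - k) → F) → ((Fin k → F) → F) → Mat d
  psd : ∀ y g, (P y g).PosSemidef
  ml : ∀ y g, ¬ IsMultilinear g → P y g = 0
  sub : ∀ y, (1 - ∑ g : (Fin k → F) → F, P y g).PosSemidef

/-- `cons(P,Q)` for arities `k ≤ ℓ`. -/
def consF {n d k ℓ : ℕ} (hkl : k ≤ ℓ) (hl : ℓ ≤ n)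
    (P : SubFamily n d F k) (Q : SubFamily n d F ℓ)
    (ρ : Matrix (Fin d × Fin d) (Fin d × Fin d) ℂ) : ℝ :=
  (∑ x : Fin n → F, ∑ f : (Fin k → F) → F, ∑ g : (Fin ℓ → F) → F,
      if f = midRestrict hkl hl g x then
        rTr ((P.P (xgt k (hkl.trans hl) x) f ⊗ₖ Q.P (xgt ℓ hl x) g) * ρ)
      else 0) / (Fintype.card F : ℝ) ^ n

/-- `inc(P,Q)` for arities `k ≤ ℓ`. -/
def incF {n d k ℓ : ℕ} (hkl : k ≤ ℓ) (hl : ℓ ≤ n)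
    (P : SubFamily n d F k) (Q : SubFamily n d F ℓ)
    (ρ : Matrix (Fin d × Fin d) (Fin d × Fin d) ℂ) : ℝ :=
  (∑ x : Fin n → F, ∑ f : (Fin k → F) → F, ∑ g : (Fin ℓ → F) → F,
      if f ≠ midRestrict hkl hl g x then
        rTr ((P.P (xgt k (hkl.trans hl) x) f ⊗ₖ Q.P (xgt ℓ hl x) g) * ρ)
      else 0) / (Fintype.card F : ℝ) ^ n

/-- `cons(P,Q)` for arbitrary arities (symmetric convention). -/
def consSym {n d k ℓ : ℕ} (hk : k ≤ n) (hl : ℓ ≤ n)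
    (P : SubFamily n d F k) (Q : SubFamily n d F ℓ)
    (ρ : Matrix (Fin d × Fin d) (Fin d × Fin d) ℂ) : ℝ :=
  if h : k ≤ ℓ then consF h hl P Q ρ else consF (le_of_not_ge h) hk Q P ρ

/-- `inc(P,A)` where `A` are the strategy's measurements (regarded as the arity-0 family). -/
def incA {n d k : ℕ} (hk : k ≤ n) (P : SubFamily n d F k)
    (A : (Fin n → F) → F → Mat d) (ρ : Matrix (Fin d × Fin d) (Fin d × Fin d) ℂ) : ℝ :=
  (∑ x : Fin n → F, ∑ g : (Fin k → F) → F, ∑ a : F,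
      if a ≠ g (xle hk x) then rTr ((P.P (xgt k hk x) g ⊗ₖ A x a) * ρ) else 0) /
    (Fintype.card F : ℝ) ^ n

/-- `Tr_ρ(P)` for a family of sub-measurements, against the one-register density `ρ`. -/
def trF {n d k : ℕ} (P : SubFamily n d F k) (ρ : Mat d) : ℝ :=
  (∑ y : Fin (n - k) → F, ∑ g : (Fin k → F) → F, rTr (P.P y g * ρ)) /
    (Fintype.card F : ℝ) ^ (n - k)

/-- Merge first `k` coordinates `u` and last `n - k` coordinates `y` into a point of `F^n`. -/
def merge {n k : ℕ} (hk : k ≤ n) (u : Fin k → F) (y : Fin (n - k) → F) : Fin n → F :=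
  fun j => if h : j.val < k then u ⟨j.val, h⟩ else y ⟨j.val - k, by have := j.isLt; omega⟩

/-- `E_{x_{≤k}} Ŝ_x^g`, with the last coordinates fixed to `y`. -/
def avgLow {n d k : ℕ} (hk : k ≤ n)
    (Sh : (Fin n → F) → ((Fin k → F) → F) → Mat d)
    (y : Fin (n - k) → F) (g : (Fin k → F) → F) : Mat d :=
  ((Fintype.card F : ℂ) ^ k)⁻¹ • ∑ u : Fin k → F, Sh (merge hk u y) g

/-- Feasibility for the self-improvement convex program. -/
def Feasible {n d k : ℕ} (hk : k ≤ n) (A : (Fin n → F) → F → Mat d)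
    (Sh : (Fin n → F) → ((Fin k → F) → F) → Mat d) : Prop :=
  (∀ x g, ¬ IsMultilinear g → Sh x g = 0) ∧
    ∀ x a, PSDle (∑ g : (Fin k → F) → F,
      if g (xle hk x) = a then Sh x g * (Sh x g)ᴴ else 0) (A x a)

/-- Objective of the self-improvement convex program. -/
def objective {n d k : ℕ} (hk : k ≤ n) (R : SubFamily n d F k) (ρ : Mat d)
    (Sh : (Fin n → F) → ((Fin k → F) → F) → Mat d) : ℝ :=
  (∑ x : Fin n → F, ∑ g : (Fin k → F) → F,
      rhoNormSq ρ (Sh x g - psqrt (R.P (xgt k hk x) g))) / (Fintype.card F : ℝ) ^ n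

/-- Optimum value `ω` of the self-improvement convex program. -/
def progOpt {n d k : ℕ} (hk : k ≤ n) (A : (Fin n → F) → F → Mat d)
    (R : SubFamily n d F k) (ρ : Mat d) : ℝ :=
  sInf {w | ∃ Sh, Feasible hk A Sh ∧ objective hk R ρ Sh = w}


/-- Remove the `i`-th coordinate: `x_{¬i}`. -/
def removeCoord {n : ℕ} (i : Fin n) (x : Fin n → F) : Fin (n - 1) → F :=
  fun j => if h : j.val < i.val then x ⟨j.val, by have := j.isLt; omega⟩
    else x ⟨j.val + 1, by have := j.isLt; omega⟩

/-- Partial trace over the middle factor of `ℂ^d ⊗ ℂ^d ⊗ ℂ^{d'}`. -/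
def ptrace2 {d d' : ℕ} (σ : Matrix (Fin d × Fin d × Fin d') (Fin d × Fin d × Fin d') ℂ) :
    Matrix (Fin d × Fin d') (Fin d × Fin d') ℂ :=
  Matrix.of fun a b => ∑ m : Fin d, σ (a.1, m, a.2) (b.1, m, b.2)

/-- Partial trace over the first factor of `ℂ^d ⊗ ℂ^{d'}`. -/
def ptrFst {d d' : ℕ} (σ : Matrix (Fin d × Fin d') (Fin d × Fin d') ℂ) :
    Matrix (Fin d') (Fin d') ℂ :=
  Matrix.of fun k l => ∑ m : Fin d, σ (m, k) (m, l)

/-- Partial trace over the second factor of `ℂ^d ⊗ ℂ^{d'}`. -/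
def ptrSnd {d d' : ℕ} (σ : Matrix (Fin d × Fin d') (Fin d × Fin d') ℂ) : Mat d :=
  Matrix.of fun i j => ∑ m : Fin d', σ (i, m) (j, m)


section AuxNorm

open Matrix

variable {m : Type*} [Fintype m] [DecidableEq m]

open scoped MatrixOrder in
lemma psqrt_eq_cfcSqrt {A : Matrix m m ℂ} (h : A.PosSemidef) : psqrt A = CFC.sqrt A := by
  rw [psqrt, dif_pos h, CFC.sqrt_eq_cfc, cfc_nnreal_eq_real _ A, h.1.cfc_eq]
  simp only [Matrix.IsHermitian.cfc, Unitary.conjStarAlgAut_apply]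
  congr 3
  funext i
  simp only [Function.comp_apply, Real.coe_sqrt, Real.coe_toNNReal _ (h.eigenvalues_nonneg i)]
  rfl

open scoped MatrixOrder in
lemma psqrt_posSemidef {A : Matrix m m ℂ} (h : A.PosSemidef) : (psqrt A).PosSemidef := by
  rw [psqrt_eq_cfcSqrt h]; exact Matrix.LE.le.posSemidef (CFC.sqrt_nonneg A)

open scoped MatrixOrder in
lemma psqrt_mul_self {A : Matrix m m ℂ} (h : A.PosSemidef) : psqrt A * psqrt A = A := by
  rw [psqrt_eq_cfcSqrt h]; exact CFC.sqrt_mul_sqrt_self A h.nonneg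

lemma psqrt_herm {A : Matrix m m ℂ} (h : A.PosSemidef) : (psqrt A)ᴴ = psqrt A :=
  (psqrt_posSemidef h).1

open scoped MatrixOrder in
lemma psqrt_eq {A Q : Matrix m m ℂ} (h : A.PosSemidef) (hQ : Q.PosSemidef)
    (hsq : Q * Q = A) : psqrt A = Q := by
  rw [psqrt_eq_cfcSqrt h]
  exact CFC.sqrt_unique hsq hQ.nonneg

lemma re_trace_nonneg {A : Matrix m m ℂ} (h : A.PosSemidef) : 0 ≤ A.trace.re := by
  have h0 : (0:ℂ) ≤ A.trace := h.trace_nonneg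
  exact (Complex.le_def.mp h0).1

lemma trace_psd_psd_nonneg {P Q : Matrix m m ℂ} (hP : P.PosSemidef) (hQ : Q.PosSemidef) :
    0 ≤ (P * Q).trace.re := by
  have hS := psqrt_posSemidef hQ
  have h1 : P * Q = (P * psqrt Q) * psqrt Q := by rw [mul_assoc, psqrt_mul_self hQ]
  have h2 : psqrt Q * (P * psqrt Q) = psqrt Q * P * (psqrt Q)ᴴ := by
    rw [psqrt_herm hQ, mul_assoc]
  rw [h1, Matrix.trace_mul_comm, h2]
  exact re_trace_nonneg (hP.mul_mul_conjTranspose_same _)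

lemma re_trace_mul_le_of_psd {X Y ρ : Matrix m m ℂ} (hρ : ρ.PosSemidef)
    (hXY : (Y - X).PosSemidef) : (X * ρ).trace.re ≤ (Y * ρ).trace.re := by
  have h := trace_psd_psd_nonneg hXY hρ
  rw [Matrix.sub_mul, Matrix.trace_sub, Complex.sub_re] at h
  linarith

/-- Squared Frobenius norm. -/
def fnSq (M : Matrix m m ℂ) : ℝ := (Mᴴ * M).trace.re

lemma fnSq_eq_sum (M : Matrix m m ℂ) :
    fnSq M = ∑ p : m × m, ‖M p.1 p.2‖ ^ 2 := by
  rw [fnSq, Matrix.trace]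
  rw [Complex.re_sum]
  rw [Fintype.sum_prod_type]
  rw [Finset.sum_comm]
  refine Finset.sum_congr rfl fun j _ => ?_
  simp only [Matrix.diag_apply, Matrix.mul_apply, Matrix.conjTranspose_apply, Complex.re_sum]
  refine Finset.sum_congr rfl fun i _ => ?_
  rw [← Complex.normSq_eq_norm_sq]
  simp only [Complex.star_def, Complex.mul_re, Complex.normSq_apply, Complex.conj_re,
    Complex.conj_im]
  ring

lemma fnSq_nonneg (M : Matrix m m ℂ) : 0 ≤ fnSq M := by
  rw [fnSq_eq_sum]
  exact Finset.sum_nonneg fun p _ => by positivity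

lemma abs_trace_mul_le (X Y : Matrix m m ℂ) :
    ‖(X * Y).trace‖ ≤ Real.sqrt (fnSq X) * Real.sqrt (fnSq Y) := by
  have h1 : (X * Y).trace = ∑ p : m × m, X p.1 p.2 * Y p.2 p.1 := by
    rw [Matrix.trace, Fintype.sum_prod_type]
    exact Finset.sum_congr rfl fun i _ => by simp [Matrix.mul_apply, Matrix.diag_apply]
  have h2 : ‖(X * Y).trace‖ ≤
      ∑ p : m × m, ‖X p.1 p.2‖ * ‖Y p.2 p.1‖ := by
    rw [h1]
    exact (norm_sum_le _ _).trans (le_of_eq (Finset.sum_congr rfl fun p _ => norm_mul _ _))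
  refine h2.trans ?_
  have h3 := Real.sum_mul_le_sqrt_mul_sqrt Finset.univ
    (fun p : m × m => ‖X p.1 p.2‖) (fun p : m × m => ‖Y p.2 p.1‖)
  refine h3.trans (le_of_eq ?_)
  rw [fnSq_eq_sum, fnSq_eq_sum]
  congr 2
  exact Fintype.sum_equiv (Equiv.prodComm m m)
    (fun p : m × m => ‖Y p.2 p.1‖ ^ 2)
    (fun p : m × m => ‖Y p.1 p.2‖ ^ 2) (fun p => rfl)

lemma fnSq_unitary_mul {U : Matrix m m ℂ} (hU : Uᴴ * U = 1) (X : Matrix m m ℂ) :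
    fnSq (U * X) = fnSq X := by
  rw [fnSq, Matrix.conjTranspose_mul, mul_assoc, ← mul_assoc Uᴴ, hU, one_mul, ← fnSq]

lemma re_trace_le_sqrt_mul_sqrt (U X Y : Matrix m m ℂ) (hU : Uᴴ * U = 1) :
    ((U * X) * Y).trace.re ≤ Real.sqrt (fnSq X) * Real.sqrt (fnSq Y) := by
  refine (Complex.re_le_norm _).trans ?_
  refine (abs_trace_mul_le (U * X) Y).trans ?_
  rw [fnSq_unitary_mul hU]

lemma re_trace_unitary_mul_le {U P : Matrix m m ℂ} (hU : Uᴴ * U = 1) (hP : P.PosSemidef) :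
    (U * P).trace.re ≤ P.trace.re := by
  have h1 : U * P = (U * psqrt P) * psqrt P := by rw [mul_assoc, psqrt_mul_self hP]
  have h2 := re_trace_le_sqrt_mul_sqrt U (psqrt P) (psqrt P) hU
  rw [h1]
  refine h2.trans ?_
  rw [Real.mul_self_sqrt (fnSq_nonneg _), fnSq, psqrt_herm hP, psqrt_mul_self hP]

lemma psd_sum {I : Type*} {f : I → Matrix m m ℂ} {s : Finset I}
    (h : ∀ i ∈ s, (f i).PosSemidef) : (∑ i ∈ s, f i).PosSemidef :=
  Finset.sum_induction f _ (fun _ _ ha hb => ha.add hb) Matrix.PosSemidef.zero h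

lemma exists_sign_unitary {H : Matrix m m ℂ} (hH : H.IsHermitian) :
    ∃ U : Matrix m m ℂ, Uᴴ * U = 1 ∧ (U * H).trace.re = traceNorm H := by
  classical
  set V : Matrix m m ℂ := (hH.eigenvectorUnitary : Matrix m m ℂ) with hV
  have hV1 : Vᴴ * V = 1 := by
    have := Matrix.mem_unitaryGroup_iff'.mp hH.eigenvectorUnitary.2
    simpa [Matrix.star_eq_conjTranspose] using this
  have hV2 : V * Vᴴ = 1 := by
    have := Matrix.mem_unitaryGroup_iff.mp hH.eigenvectorUnitary.2
    simpa [Matrix.star_eq_conjTranspose] using this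
  set E : m → ℝ := hH.eigenvalues with hE
  have hspec : H = V * Matrix.diagonal (fun i => (E i : ℂ)) * Vᴴ := by
    have := hH.spectral_theorem
    rw [this]
    rfl
  have key : ∀ f g : m → ℂ, (V * Matrix.diagonal f * Vᴴ) * (V * Matrix.diagonal g * Vᴴ)
      = V * Matrix.diagonal (fun i => f i * g i) * Vᴴ := by
    intro f g
    rw [show (V * Matrix.diagonal f * Vᴴ) * (V * Matrix.diagonal g * Vᴴ)
        = V * (Matrix.diagonal f * ((Vᴴ * V) * (Matrix.diagonal g * Vᴴ))) from by
          noncomm_ring, hV1, one_mul,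
      show Matrix.diagonal f * (Matrix.diagonal g * Vᴴ)
        = Matrix.diagonal (fun i => f i * g i) * Vᴴ from by
          rw [← mul_assoc, Matrix.diagonal_mul_diagonal], ← mul_assoc]
  have keyT : ∀ f : m → ℂ, (V * Matrix.diagonal f * Vᴴ)ᴴ
      = V * Matrix.diagonal (fun i => conj (f i)) * Vᴴ := by
    intro f
    rw [Matrix.conjTranspose_mul, Matrix.conjTranspose_mul, Matrix.conjTranspose_conjTranspose,
      Matrix.diagonal_conjTranspose, mul_assoc]
    rfl
  have keyTr : ∀ f : m → ℂ, (V * Matrix.diagonal f * Vᴴ).trace = ∑ i, f i := by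
    intro f
    rw [Matrix.trace_mul_comm, ← mul_assoc, hV1, one_mul, Matrix.trace_diagonal]
  set sgn : m → ℂ := fun i => if E i < 0 then -1 else 1 with hsgn
  refine ⟨V * Matrix.diagonal sgn * Vᴴ, ?_, ?_⟩
  · rw [keyT, key]
    have h1 : (fun i => conj (sgn i) * sgn i) = fun _ => (1 : ℂ) := by
      funext i
      by_cases h : E i < 0 <;> simp [hsgn, h]
    rw [h1]
    rw [show Matrix.diagonal (fun _ : m => (1:ℂ)) = 1 from Matrix.diagonal_one]
    rw [mul_one, hV2]
  · have hUH : (V * Matrix.diagonal sgn * Vᴴ) * H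
        = V * Matrix.diagonal (fun i : m => ((|E i| : ℝ) : ℂ)) * Vᴴ := by
      rw [hspec, key]
      have he : (fun i => sgn i * (E i : ℂ)) = (fun i : m => ((|E i| : ℝ) : ℂ)) := by
        funext i
        by_cases h : E i < 0
        · simp only [hsgn, if_pos h]
          rw [abs_of_neg h]; push_cast; ring
        · simp only [hsgn, if_neg h]
          rw [abs_of_nonneg (le_of_not_gt h)]; ring
      rw [he]
    have hHH : Hᴴ * H = V * Matrix.diagonal (fun i => ((E i : ℂ) * (E i : ℂ))) * Vᴴ := by
      rw [hH.eq]
      conv_lhs => rw [hspec]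
      rw [key]
    have hQpsd : (V * Matrix.diagonal (fun i => ((|E i| : ℝ) : ℂ)) * Vᴴ).PosSemidef := by
      refine Matrix.PosSemidef.mul_mul_conjTranspose_same ?_ V
      refine Matrix.posSemidef_diagonal_iff.mpr fun i => ?_
      exact_mod_cast Complex.zero_le_real.mpr (abs_nonneg _)
    have hQsq : (V * Matrix.diagonal (fun i => ((|E i| : ℝ) : ℂ)) * Vᴴ) *
        (V * Matrix.diagonal (fun i => ((|E i| : ℝ) : ℂ)) * Vᴴ) = Hᴴ * H := by
      rw [key, hHH]
      have he : (fun i => ((|E i| : ℝ) : ℂ) * ((|E i| : ℝ) : ℂ))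
          = (fun i => (E i : ℂ) * (E i : ℂ)) := by
        funext i
        simp only [← Complex.ofReal_mul, abs_mul_abs_self]
      rw [he]
    have hps : psqrt (Hᴴ * H) = V * Matrix.diagonal (fun i => ((|E i| : ℝ) : ℂ)) * Vᴴ :=
      psqrt_eq (Matrix.posSemidef_conjTranspose_mul_self H) hQpsd hQsq
    rw [hUH]
    unfold traceNorm rTr
    rw [hps, keyTr]

lemma one_sub_psd {C : Matrix m m ℂ} (hC : C.PosSemidef) (h1 : (1 - C * C).PosSemidef) :
    (1 - C).PosSemidef := by
  classical
  set V : Matrix m m ℂ := (hC.1.eigenvectorUnitary : Matrix m m ℂ) with hV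
  have hV1 : Vᴴ * V = 1 := by
    have := Matrix.mem_unitaryGroup_iff'.mp hC.1.eigenvectorUnitary.2
    simpa [Matrix.star_eq_conjTranspose] using this
  have hV2 : V * Vᴴ = 1 := by
    have := Matrix.mem_unitaryGroup_iff.mp hC.1.eigenvectorUnitary.2
    simpa [Matrix.star_eq_conjTranspose] using this
  set E : m → ℝ := hC.1.eigenvalues with hE
  have hspec : C = V * Matrix.diagonal (fun i => (E i : ℂ)) * Vᴴ := by
    have := hC.1.spectral_theorem
    rw [this]
    rfl
  have key : ∀ f g : m → ℂ, (V * Matrix.diagonal f * Vᴴ) * (V * Matrix.diagonal g * Vᴴ)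
      = V * Matrix.diagonal (fun i => f i * g i) * Vᴴ := by
    intro f g
    rw [show (V * Matrix.diagonal f * Vᴴ) * (V * Matrix.diagonal g * Vᴴ)
        = V * (Matrix.diagonal f * ((Vᴴ * V) * (Matrix.diagonal g * Vᴴ))) from by
          noncomm_ring, hV1, one_mul,
      show Matrix.diagonal f * (Matrix.diagonal g * Vᴴ)
        = Matrix.diagonal (fun i => f i * g i) * Vᴴ from by
          rw [← mul_assoc, Matrix.diagonal_mul_diagonal], ← mul_assoc]
  have h2 : Vᴴ * (1 - C * C) * V
      = Matrix.diagonal (fun i => 1 - (E i : ℂ) * (E i : ℂ)) := by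
    conv_lhs => rw [hspec, key]
    rw [Matrix.mul_sub, Matrix.sub_mul, mul_one, hV1,
      show Vᴴ * (V * Matrix.diagonal (fun i => (E i : ℂ) * (E i : ℂ)) * Vᴴ) * V
        = (Vᴴ * V) * Matrix.diagonal (fun i => (E i : ℂ) * (E i : ℂ)) * (Vᴴ * V) from by
          noncomm_ring, hV1, one_mul, mul_one]
    rw [← Matrix.diagonal_one, Matrix.diagonal_sub]
  have h3 := h1.conjTranspose_mul_mul_same V
  rw [h2] at h3
  have h4 : ∀ i, E i ≤ 1 := by
    intro i
    have h5 := Matrix.posSemidef_diagonal_iff.mp h3 i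
    have h6 : ((1 - E i * E i : ℝ) : ℂ) = 1 - (E i : ℂ) * (E i : ℂ) := by push_cast; ring
    rw [← h6] at h5
    have h7 : (0:ℝ) ≤ 1 - E i * E i := Complex.zero_le_real.mp h5
    nlinarith [sq_nonneg (E i - 1)]
  have h8 : 1 - C = V * Matrix.diagonal (fun i => ((1 - E i : ℝ) : ℂ)) * Vᴴ := by
    conv_lhs => rw [hspec, ← hV2]
    have : V * Vᴴ = V * Matrix.diagonal (fun _ : m => (1:ℂ)) * Vᴴ := by
      rw [Matrix.diagonal_one, mul_one]
    rw [this, ← Matrix.sub_mul, ← Matrix.mul_sub, Matrix.diagonal_sub]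
    push_cast
    rfl
  rw [h8]
  refine Matrix.PosSemidef.mul_mul_conjTranspose_same ?_ V
  refine Matrix.posSemidef_diagonal_iff.mpr fun i => ?_
  exact_mod_cast Complex.zero_le_real.mpr (by linarith [h4 i])

lemma psd_sub_sq {X : Matrix m m ℂ} (hX : X.PosSemidef) (h1 : (1 - X).PosSemidef) :
    (X - X * X).PosSemidef := by
  have hss := psqrt_mul_self hX
  have hh := psqrt_herm hX
  have h2 : psqrt X * X * psqrt X = X * X := by
    calc psqrt X * X * psqrt X = psqrt X * (psqrt X * psqrt X) * psqrt X := by rw [hss]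
      _ = (psqrt X * psqrt X) * (psqrt X * psqrt X) := by noncomm_ring
      _ = X * X := by rw [hss]
  have key : X - X * X = psqrt X * (1 - X) * (psqrt X)ᴴ := by
    rw [hh, Matrix.mul_sub, mul_one, Matrix.sub_mul, h2, hss]
  rw [key]
  exact h1.mul_mul_conjTranspose_same _

lemma kron_conjT {m' : Type*} [Fintype m'] [DecidableEq m'] (X : Matrix m m ℂ)
    (Y : Matrix m' m' ℂ) : (X ⊗ₖ Y)ᴴ = Xᴴ ⊗ₖ Yᴴ := by
  ext a b
  simp [Matrix.conjTranspose_apply, Matrix.kroneckerMap_apply]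

lemma kron_posSemidef {m' : Type*} [Fintype m'] [DecidableEq m'] {X : Matrix m m ℂ}
    {Y : Matrix m' m' ℂ} (hX : X.PosSemidef) (hY : Y.PosSemidef) : (X ⊗ₖ Y).PosSemidef := by
  have h : X ⊗ₖ Y = (psqrt X ⊗ₖ psqrt Y)ᴴ * (psqrt X ⊗ₖ psqrt Y) := by
    rw [kron_conjT, psqrt_herm hX, psqrt_herm hY, ← Matrix.mul_kronecker_mul,
      psqrt_mul_self hX, psqrt_mul_self hY]
  rw [h]
  exact Matrix.posSemidef_conjTranspose_mul_self _

lemma sub_kron {m' : Type*} [Fintype m'] [DecidableEq m'] (X Y : Matrix m m ℂ)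
    (Z : Matrix m' m' ℂ) : (X - Y) ⊗ₖ Z = X ⊗ₖ Z - Y ⊗ₖ Z := by
  ext a b
  simp [Matrix.kroneckerMap_apply, Matrix.sub_apply, sub_mul]

lemma gentle {U B ρ : Matrix m m ℂ} (hU : Uᴴ * U = 1) (hB : Bᴴ = B) (hρ : ρ.PosSemidef)
    {tt dd : ℝ} (h1 : (B * B * ρ).trace.re ≤ tt) (h2 : ((B - 1) * (B - 1) * ρ).trace.re ≤ dd)
    (h3 : ρ.trace.re ≤ tt) (hdd0 : 0 ≤ dd) (htt0 : 0 ≤ tt) :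
    (U * (B * ρ * B - ρ)).trace.re ≤ 2 * Real.sqrt dd * Real.sqrt tt := by
  set S := psqrt ρ with hS
  have hSS : S * S = ρ := psqrt_mul_self hρ
  have hSh : Sᴴ = S := psqrt_herm hρ
  have hdec : B * ρ * B - ρ = (B * S) * (S * B - S) + ((B - 1) * S) * S := by
    rw [← hSS]; noncomm_ring
  have f1 : fnSq (B * S) ≤ tt := by
    rw [fnSq, Matrix.conjTranspose_mul, hSh, hB,
      show S * B * (B * S) = S * (B * B * S) from by noncomm_ring, Matrix.trace_mul_comm,
      show B * B * S * S = B * B * ρ from by rw [mul_assoc, hSS]]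
    exact h1
  have f2 : fnSq (S * B - S) ≤ dd := by
    rw [fnSq,
      show (S * B - S)ᴴ = (B - 1) * S from by
        rw [Matrix.conjTranspose_sub, Matrix.conjTranspose_mul, hSh, hB, Matrix.sub_mul, one_mul],
      show S * B - S = S * (B - 1) from by noncomm_ring,
      show (B - 1) * S * (S * (B - 1)) = (B - 1) * ρ * (B - 1) from by
        rw [← hSS]; noncomm_ring,
      Matrix.trace_mul_comm,
      show (B - 1) * ((B - 1) * ρ) = (B - 1) * (B - 1) * ρ from by noncomm_ring]
    exact h2
  have f3 : fnSq ((B - 1) * S) ≤ dd := by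
    rw [fnSq,
      show ((B - 1) * S)ᴴ = S * (B - 1) from by
        rw [Matrix.conjTranspose_mul, hSh, Matrix.conjTranspose_sub, hB,
          Matrix.conjTranspose_one],
      show S * (B - 1) * ((B - 1) * S) = S * ((B - 1) * (B - 1) * S) from by noncomm_ring,
      Matrix.trace_mul_comm,
      show (B - 1) * (B - 1) * S * S = (B - 1) * (B - 1) * ρ from by rw [mul_assoc, hSS]]
    exact h2
  have f4 : fnSq S ≤ tt := by rw [fnSq, hSh, hSS]; exact h3
  have e1 : (U * ((B * S) * (S * B - S))).trace.re ≤ Real.sqrt tt * Real.sqrt dd := by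
    rw [← mul_assoc]
    refine (re_trace_le_sqrt_mul_sqrt U (B * S) (S * B - S) hU).trans ?_
    exact mul_le_mul (Real.sqrt_le_sqrt f1) (Real.sqrt_le_sqrt f2) (Real.sqrt_nonneg _)
      (Real.sqrt_nonneg _)
  have e2 : (U * (((B - 1) * S) * S)).trace.re ≤ Real.sqrt dd * Real.sqrt tt := by
    rw [← mul_assoc]
    refine (re_trace_le_sqrt_mul_sqrt U ((B - 1) * S) S hU).trans ?_
    exact mul_le_mul (Real.sqrt_le_sqrt f3) (Real.sqrt_le_sqrt f4) (Real.sqrt_nonneg _)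
      (Real.sqrt_nonneg _)
  calc (U * (B * ρ * B - ρ)).trace.re
      = (U * ((B * S) * (S * B - S))).trace.re + (U * (((B - 1) * S) * S)).trace.re := by
        rw [hdec, Matrix.mul_add, Matrix.trace_add, Complex.add_re]
    _ ≤ Real.sqrt tt * Real.sqrt dd + Real.sqrt dd * Real.sqrt tt := add_le_add e1 e2
    _ = 2 * Real.sqrt dd * Real.sqrt tt := by ring

end AuxNorm

section AuxPt

open Matrix

variable {d d' : ℕ}

lemma trace_mul_eq {α : Type*} [Fintype α] (X Y : Matrix α α ℂ) :
    (X * Y).trace = ∑ a, ∑ b, X a b * Y b a := by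
  simp [Matrix.trace, Matrix.diag, Matrix.mul_apply]

lemma sum_ite_push {β : Type*} [Fintype β] (c : Prop) [Decidable c] (f : β → ℂ) :
    (∑ y : β, if c then f y else 0) = if c then ∑ y, f y else 0 := by
  split <;> simp

/-- Isometry embedding `ℂ^d ⊗ ℂ^{d'} → ℂ^d ⊗ ℂ^d ⊗ ℂ^{d'}` inserting `|mm⟩` in the middle. -/
def emb (d d' : ℕ) (mm : Fin d) : Matrix (Fin d × Fin d') (Fin d × Fin d × Fin d') ℂ :=
  Matrix.of fun a t => if t = (a.1, mm, a.2) then 1 else 0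

lemma ptrace2_eq_sum_conj (κ : Matrix (Fin d × Fin d × Fin d') (Fin d × Fin d × Fin d') ℂ) :
    ptrace2 κ = ∑ mm, emb d d' mm * κ * (emb d d' mm)ᴴ := by
  ext a b
  simp [ptrace2, emb, Matrix.mul_apply, Matrix.conjTranspose_apply, Matrix.sum_apply,
    Finset.sum_ite_eq, Finset.sum_ite_eq']

lemma ptrace2_posSemidef {κ : Matrix (Fin d × Fin d × Fin d') (Fin d × Fin d × Fin d') ℂ}
    (hκ : κ.PosSemidef) : (ptrace2 κ).PosSemidef := by
  rw [ptrace2_eq_sum_conj]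
  exact psd_sum fun mm _ => hκ.mul_mul_conjTranspose_same _

lemma ptrace2_trace (κ : Matrix (Fin d × Fin d × Fin d') (Fin d × Fin d × Fin d') ℂ) :
    (ptrace2 κ).trace = κ.trace := by
  simp only [Matrix.trace, Matrix.diag, ptrace2, Matrix.of_apply, Fintype.sum_prod_type]
  exact Finset.sum_congr rfl fun x _ => Finset.sum_comm

lemma trace_kron_ptrace2 (C : Mat d)
    (κ : Matrix (Fin d × Fin d × Fin d') (Fin d × Fin d × Fin d') ℂ) :
    ((C ⊗ₖ (1 : Matrix (Fin d') (Fin d') ℂ)) * ptrace2 κ).trace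
      = ((C ⊗ₖ ((1 : Mat d) ⊗ₖ (1 : Matrix (Fin d') (Fin d') ℂ))) * κ).trace := by
  rw [trace_mul_eq, trace_mul_eq]
  simp only [Matrix.kroneckerMap_apply, Matrix.one_apply, ptrace2, Matrix.of_apply,
    Fintype.sum_prod_type, ite_mul, mul_ite, one_mul, mul_one, zero_mul, mul_zero,
    sum_ite_push, Finset.sum_ite_eq, Finset.sum_ite_eq', Finset.mem_univ, if_true,
    Finset.mul_sum, Finset.sum_mul]
  have hR : ∀ x : Fin d, (∑ m : Fin d, ∑ y : Fin d', ∑ c : Fin d, C x c * κ (c,m,y) (x,m,y))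
      = ∑ c : Fin d, ∑ y : Fin d', ∑ m : Fin d, C x c * κ (c,m,y) (x,m,y) := by
    intro x
    calc (∑ m : Fin d, ∑ y : Fin d', ∑ c : Fin d, C x c * κ (c,m,y) (x,m,y))
        = ∑ m : Fin d, ∑ c : Fin d, ∑ y : Fin d', C x c * κ (c,m,y) (x,m,y) :=
          Finset.sum_congr rfl fun m _ => Finset.sum_comm
      _ = ∑ c : Fin d, ∑ m : Fin d, ∑ y : Fin d', C x c * κ (c,m,y) (x,m,y) := Finset.sum_comm
      _ = ∑ c : Fin d, ∑ y : Fin d', ∑ m : Fin d, C x c * κ (c,m,y) (x,m,y) :=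
          Finset.sum_congr rfl fun c _ => Finset.sum_comm
  exact Finset.sum_congr rfl fun x _ => Finset.sum_comm.trans (hR x).symm

lemma ptrace2_conj_entry (C : Mat d)
    (κ : Matrix (Fin d × Fin d × Fin d') (Fin d × Fin d × Fin d') ℂ)
    (a b : Fin d × Fin d') :
    ptrace2 (((1 : Mat d) ⊗ₖ (C ⊗ₖ (1 : Matrix (Fin d') (Fin d') ℂ))) * κ *
        ((1 : Mat d) ⊗ₖ (C ⊗ₖ (1 : Matrix (Fin d') (Fin d') ℂ)))) a b
      = ∑ p, ∑ q, (C * C) q p * κ (a.1, p, a.2) (b.1, q, b.2) := by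
  simp only [ptrace2, Matrix.of_apply, Matrix.mul_apply, Matrix.kroneckerMap_apply,
    Matrix.one_apply, Fintype.sum_prod_type, ite_mul, mul_ite, one_mul, mul_one,
    zero_mul, mul_zero, sum_ite_push, Finset.sum_ite_eq, Finset.sum_ite_eq',
    Finset.mem_univ, if_true, Finset.mul_sum, Finset.sum_mul]
  have hL : (∑ m : Fin d, ∑ q : Fin d, ∑ p : Fin d,
        C m p * κ (a.1, p, a.2) (b.1, q, b.2) * C q m)
      = ∑ p : Fin d, ∑ q : Fin d, ∑ m : Fin d,
        C m p * κ (a.1, p, a.2) (b.1, q, b.2) * C q m := by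
    calc (∑ m : Fin d, ∑ q : Fin d, ∑ p : Fin d,
          C m p * κ (a.1, p, a.2) (b.1, q, b.2) * C q m)
        = ∑ m : Fin d, ∑ p : Fin d, ∑ q : Fin d,
          C m p * κ (a.1, p, a.2) (b.1, q, b.2) * C q m :=
          Finset.sum_congr rfl fun m _ => Finset.sum_comm
      _ = ∑ p : Fin d, ∑ m : Fin d, ∑ q : Fin d,
          C m p * κ (a.1, p, a.2) (b.1, q, b.2) * C q m := Finset.sum_comm
      _ = ∑ p : Fin d, ∑ q : Fin d, ∑ m : Fin d,
          C m p * κ (a.1, p, a.2) (b.1, q, b.2) * C q m :=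
          Finset.sum_congr rfl fun p _ => Finset.sum_comm
  rw [hL]
  refine Finset.sum_congr rfl fun p _ => Finset.sum_congr rfl fun q _ =>
    Finset.sum_congr rfl fun mm _ => by ring

end AuxPt

theorem statement12 (d d' : ℕ) (I : Type) [Fintype I] [DecidableEq I]
    (σ : Matrix (Fin d × Fin d × Fin d') (Fin d × Fin d × Fin d') ℂ) (A : I → Mat d)
    (hσ : σ.PosSemidef) (hσ1 : rTr σ ≤ 1)
    (hswap : ∀ (i j : Fin d) (k : Fin d') (i' j' : Fin d) (k' : Fin d'),
      σ (i, j, k) (i', j', k') = σ (j, i, k) (j', i', k'))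
    (hA : ∀ i, (A i).PosSemidef) (hAsum : ∑ i, A i = 1) :
    traceNorm ((∑ i, (psqrt (A i) ⊗ₖ (1 : Matrix (Fin d') (Fin d') ℂ)) * ptrace2 σ *
          (psqrt (A i) ⊗ₖ (1 : Matrix (Fin d') (Fin d') ℂ))) - ptrace2 σ) ≤
      2 * Real.sqrt (∑ i, ∑ j, if i ≠ j then
          rTr ((A i ⊗ₖ (A j ⊗ₖ (1 : Matrix (Fin d') (Fin d') ℂ))) * σ) else 0) +
        (∑ i, ∑ j, if i ≠ j then
          rTr ((A i ⊗ₖ (A j ⊗ₖ (1 : Matrix (Fin d') (Fin d') ℂ))) * σ) else 0) := by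
  classical
  set δ : ℝ := ∑ i, ∑ j, if i ≠ j then
      rTr ((A i ⊗ₖ (A j ⊗ₖ (1 : Matrix (Fin d') (Fin d') ℂ))) * σ) else 0 with hδdef
  set ρ := ptrace2 σ with hρdef
  set Bf : I → Matrix (Fin d × Fin d') (Fin d × Fin d') ℂ :=
      fun i => psqrt (A i) ⊗ₖ (1 : Matrix (Fin d') (Fin d') ℂ) with hBf
  have hgoalD : (∑ i, (psqrt (A i) ⊗ₖ (1 : Matrix (Fin d') (Fin d') ℂ)) * ρ *
        (psqrt (A i) ⊗ₖ (1 : Matrix (Fin d') (Fin d') ℂ))) - ρ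
      = (∑ i, Bf i * ρ * Bf i) - ρ := rfl
  rw [hgoalD]
  set D := (∑ i, Bf i * ρ * Bf i) - ρ with hDdef
  -- basic facts about the measurement operators
  have hs : ∀ i, (psqrt (A i)).PosSemidef := fun i => psqrt_posSemidef (hA i)
  have hss : ∀ i, psqrt (A i) * psqrt (A i) = A i := fun i => psqrt_mul_self (hA i)
  have hsherm : ∀ i, (psqrt (A i))ᴴ = psqrt (A i) := fun i => psqrt_herm (hA i)
  have hBB : ∀ i, Bf i * Bf i = A i ⊗ₖ (1 : Matrix (Fin d') (Fin d') ℂ) := by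
    intro i
    simp only [hBf]
    rw [← Matrix.mul_kronecker_mul, hss i, one_mul]
  have hBherm : ∀ i, (Bf i)ᴴ = Bf i := by
    intro i
    simp only [hBf]
    rw [kron_conjT, hsherm i, Matrix.conjTranspose_one]
  have hBBpsd : ∀ i, (Bf i * Bf i).PosSemidef := by
    intro i
    rw [hBB i]
    exact kron_posSemidef (hA i) Matrix.PosSemidef.one
  have hsumBB : ∑ i, Bf i * Bf i = 1 := by
    have h1 : ∑ i, Bf i * Bf i = (∑ i, A i) ⊗ₖ (1 : Matrix (Fin d') (Fin d') ℂ) := by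
      simp only [hBB]
      ext a b
      simp [Matrix.sum_apply, Matrix.kroneckerMap_apply, Finset.sum_mul]
    rw [h1, hAsum, Matrix.one_kronecker_one]
  have herase : ∀ j : I, ∑ i ∈ Finset.univ.erase j, Bf i * Bf i = 1 - Bf j * Bf j := by
    intro j
    have h := Finset.sum_erase_add Finset.univ (fun i => Bf i * Bf i) (Finset.mem_univ j)
    rw [hsumBB] at h
    exact eq_sub_of_add_eq h
  have hone_sub_BB : ∀ j : I, ((1 : Matrix (Fin d × Fin d') (Fin d × Fin d') ℂ)
      - Bf j * Bf j).PosSemidef := by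
    intro j
    rw [← herase j]
    exact psd_sum fun i _ => hBBpsd i
  have hAle1 : ∀ j, ((1 : Mat d) - A j).PosSemidef := by
    intro j
    have h := Finset.sum_erase_add Finset.univ A (Finset.mem_univ j)
    rw [hAsum] at h
    rw [← eq_sub_of_add_eq h]
    exact psd_sum fun i _ => hA i
  have hBsubpsd : ∀ j, (Bf j - Bf j * Bf j).PosSemidef := by
    intro j
    have h1 : ((1 : Mat d) - psqrt (A j)).PosSemidef := by
      refine one_sub_psd (hs j) ?_
      rw [hss j]
      exact hAle1 j
    have h2 := psd_sub_sq (hs j) h1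
    rw [hss j] at h2
    have h3 : Bf j - Bf j * Bf j
        = (psqrt (A j) - A j) ⊗ₖ (1 : Matrix (Fin d') (Fin d') ℂ) := by
      rw [hBB j, sub_kron]
    rw [h3]
    exact kron_posSemidef h2 Matrix.PosSemidef.one
  -- the conditioned states
  set Mj : I → Matrix (Fin d × Fin d × Fin d') (Fin d × Fin d × Fin d') ℂ :=
      fun j => (1 : Mat d) ⊗ₖ (psqrt (A j) ⊗ₖ (1 : Matrix (Fin d') (Fin d') ℂ)) with hMj
  set ρf : I → Matrix (Fin d × Fin d') (Fin d × Fin d') ℂ :=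
      fun j => ptrace2 (Mj j * σ * Mj j) with hρf
  have hMherm : ∀ j, (Mj j)ᴴ = Mj j := by
    intro j
    simp only [hMj]
    rw [kron_conjT, kron_conjT, hsherm j, Matrix.conjTranspose_one, Matrix.conjTranspose_one]
  have hρfpsd : ∀ j, (ρf j).PosSemidef := by
    intro j
    refine ptrace2_posSemidef ?_
    have h1 : Mj j * σ * Mj j = Mj j * σ * (Mj j)ᴴ := by rw [hMherm j]
    rw [h1]
    exact hσ.mul_mul_conjTranspose_same _
  have hρpsd : ρ.PosSemidef := ptrace2_posSemidef hσ
  have hsumρf : ∑ j, ρf j = ρ := by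
    ext a b
    rw [Matrix.sum_apply]
    calc ∑ j, ρf j a b
        = ∑ j, ∑ p, ∑ q, (A j) q p * σ (a.1, p, a.2) (b.1, q, b.2) := by
          refine Finset.sum_congr rfl fun j _ => ?_
          simp only [hρf, hMj]
          rw [ptrace2_conj_entry, hss j]
      _ = ∑ p, ∑ q, (∑ j, (A j) q p) * σ (a.1, p, a.2) (b.1, q, b.2) := by
          rw [Finset.sum_comm]
          refine Finset.sum_congr rfl fun p _ => ?_
          rw [Finset.sum_comm]
          refine Finset.sum_congr rfl fun q _ => ?_
          rw [Finset.sum_mul]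
      _ = ∑ p, σ (a.1, p, a.2) (b.1, p, b.2) := by
          have h1 : ∀ q p : Fin d, (∑ j, (A j) q p) = (1 : Mat d) q p := by
            intro q p
            rw [← Matrix.sum_apply, hAsum]
          simp only [h1, Matrix.one_apply, ite_mul, one_mul, zero_mul]
          refine Finset.sum_congr rfl fun p _ => ?_
          simp [Finset.sum_ite_eq, Finset.sum_ite_eq']
      _ = ρ a b := rfl
  have htransfer : ∀ (C : Mat d) (j : I),
      ((C ⊗ₖ (1 : Matrix (Fin d') (Fin d') ℂ)) * ρf j).trace
        = ((C ⊗ₖ (A j ⊗ₖ (1 : Matrix (Fin d') (Fin d') ℂ))) * σ).trace := by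
    intro C j
    simp only [hρf]
    rw [trace_kron_ptrace2]
    have hcyc : ((C ⊗ₖ ((1 : Mat d) ⊗ₖ (1 : Matrix (Fin d') (Fin d') ℂ))) *
          (Mj j * σ * Mj j)).trace
        = ((Mj j * (C ⊗ₖ ((1 : Mat d) ⊗ₖ (1 : Matrix (Fin d') (Fin d') ℂ))) * Mj j) * σ).trace := by
      rw [show (C ⊗ₖ ((1 : Mat d) ⊗ₖ (1 : Matrix (Fin d') (Fin d') ℂ))) * (Mj j * σ * Mj j)
          = ((C ⊗ₖ ((1 : Mat d) ⊗ₖ (1 : Matrix (Fin d') (Fin d') ℂ))) * Mj j * σ) * Mj j from by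
            noncomm_ring,
        Matrix.trace_mul_comm,
        show Mj j * ((C ⊗ₖ ((1 : Mat d) ⊗ₖ (1 : Matrix (Fin d') (Fin d') ℂ))) * Mj j * σ)
          = (Mj j * (C ⊗ₖ ((1 : Mat d) ⊗ₖ (1 : Matrix (Fin d') (Fin d') ℂ))) * Mj j) * σ from by
            noncomm_ring]
    rw [hcyc]
    have hmid : Mj j * (C ⊗ₖ ((1 : Mat d) ⊗ₖ (1 : Matrix (Fin d') (Fin d') ℂ))) * Mj j
        = C ⊗ₖ (A j ⊗ₖ (1 : Matrix (Fin d') (Fin d') ℂ)) := by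
      simp only [hMj]
      rw [← Matrix.mul_kronecker_mul, ← Matrix.mul_kronecker_mul, one_mul, mul_one,
        ← Matrix.mul_kronecker_mul, ← Matrix.mul_kronecker_mul, one_mul, mul_one, hss j, one_mul]
    rw [hmid]
  -- scalar quantities
  set tt : I → ℝ := fun j => (ρf j).trace.re with httdef
  set dd : I → ℝ := fun j =>
      (((1 : Matrix (Fin d × Fin d') (Fin d × Fin d') ℂ) - Bf j * Bf j) * ρf j).trace.re
      with hdddef
  have hdd0 : ∀ j, 0 ≤ dd j := fun j => trace_psd_psd_nonneg (hone_sub_BB j) (hρfpsd j)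
  have htt0 : ∀ j, 0 ≤ tt j := fun j => re_trace_nonneg (hρfpsd j)
  have hBBrho_le : ∀ j, (Bf j * Bf j * ρf j).trace.re ≤ tt j := by
    intro j
    have h := hdd0 j
    simp only [hdddef] at h
    rw [Matrix.sub_mul, Matrix.trace_sub, Complex.sub_re, one_mul] at h
    simp only [httdef]
    linarith
  have hsq_le : ∀ j, ((Bf j - 1) * (Bf j - 1) * ρf j).trace.re ≤ dd j := by
    intro j
    refine re_trace_mul_le_of_psd (hρfpsd j) ?_
    have heq : ((1 : Matrix (Fin d × Fin d') (Fin d × Fin d') ℂ) - Bf j * Bf j)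
        - (Bf j - 1) * (Bf j - 1) = (Bf j - Bf j * Bf j) + (Bf j - Bf j * Bf j) := by
      noncomm_ring
    rw [heq]
    exact (hBsubpsd j).add (hBsubpsd j)
  have hcross : ∀ (j i : I), (Bf i * Bf i * ρf j).trace.re
      = rTr ((A i ⊗ₖ (A j ⊗ₖ (1 : Matrix (Fin d') (Fin d') ℂ))) * σ) := by
    intro j i
    rw [hBB i, htransfer (A i) j]
    rfl
  have hdd_eq : ∀ j, dd j = ∑ i ∈ Finset.univ.erase j,
      rTr ((A i ⊗ₖ (A j ⊗ₖ (1 : Matrix (Fin d') (Fin d') ℂ))) * σ) := by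
    intro j
    simp only [hdddef]
    rw [← herase j, Finset.sum_mul, Matrix.trace_sum, Complex.re_sum]
    exact Finset.sum_congr rfl fun i _ => hcross j i
  have hδ_eq : δ = ∑ j, dd j := by
    rw [hδdef, Finset.sum_comm]
    refine Finset.sum_congr rfl fun j _ => ?_
    rw [hdd_eq j, ← Finset.sum_filter, Finset.filter_ne']
  have hδ0 : 0 ≤ δ := by
    rw [hδ_eq]
    exact Finset.sum_nonneg fun j _ => hdd0 j
  have hT1 : ∑ j, tt j ≤ 1 := by
    simp only [httdef]
    rw [← Complex.re_sum, ← Matrix.trace_sum, hsumρf, hρdef, ptrace2_trace]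
    exact hσ1
  -- hermiticity of D and the sign unitary
  have hDherm : D.IsHermitian := by
    rw [Matrix.IsHermitian, hDdef, Matrix.conjTranspose_sub, Matrix.conjTranspose_sum]
    have h1 : ∀ i, (Bf i * ρ * Bf i)ᴴ = Bf i * ρ * Bf i := by
      intro i
      have hρh : ρᴴ = ρ := hρpsd.1
      rw [Matrix.conjTranspose_mul, Matrix.conjTranspose_mul, hBherm i, hρh, mul_assoc]
    have hρh : ρᴴ = ρ := hρpsd.1
    simp only [h1, hρh]
  obtain ⟨U, hUu, hUtr⟩ := exists_sign_unitary hDherm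
  rw [← hUtr]
  -- split the trace
  have hsplit : (U * D).trace.re
      = (∑ j, (U * (Bf j * ρf j * Bf j - ρf j)).trace.re)
        + ∑ j, ∑ i ∈ Finset.univ.erase j, (U * (Bf i * ρf j * Bf i)).trace.re := by
    have h1 : D = (∑ j, (Bf j * ρf j * Bf j - ρf j))
        + ∑ j, ∑ i ∈ Finset.univ.erase j, (Bf i * ρf j * Bf i) := by
      rw [hDdef]
      conv_lhs => rw [← hsumρf]
      have h2 : ∀ i, Bf i * (∑ j, ρf j) * Bf i = ∑ j, Bf i * ρf j * Bf i := by
        intro i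
        rw [Finset.mul_sum, Finset.sum_mul]
      rw [show (∑ i, Bf i * (∑ j, ρf j) * Bf i) = ∑ i, ∑ j, Bf i * ρf j * Bf i from
        Finset.sum_congr rfl fun i _ => h2 i, Finset.sum_comm, ← Finset.sum_sub_distrib,
        Finset.sum_add_distrib.symm]
      refine Finset.sum_congr rfl fun j _ => ?_
      rw [← Finset.sum_erase_add Finset.univ _ (Finset.mem_univ j)]
      abel
    rw [h1, Matrix.mul_add, Matrix.trace_add, Complex.add_re, Finset.mul_sum,
      Matrix.trace_sum, Complex.re_sum]
    congr 1
    rw [Finset.mul_sum]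
    rw [show (∑ j, U * ∑ i ∈ Finset.univ.erase j, Bf i * ρf j * Bf i)
        = ∑ j, ∑ i ∈ Finset.univ.erase j, U * (Bf i * ρf j * Bf i) from
      Finset.sum_congr rfl fun j _ => Finset.mul_sum _ _ _]
    rw [Matrix.trace_sum, Complex.re_sum]
    exact Finset.sum_congr rfl fun j _ => by rw [Matrix.trace_sum, Complex.re_sum]
  rw [hsplit]
  -- bound the two parts
  have hpart2 : (∑ j, ∑ i ∈ Finset.univ.erase j, (U * (Bf i * ρf j * Bf i)).trace.re) ≤ δ := by
    rw [hδ_eq]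
    refine Finset.sum_le_sum fun j _ => ?_
    rw [hdd_eq j]
    refine Finset.sum_le_sum fun i _ => ?_
    have hpsd : (Bf i * ρf j * Bf i).PosSemidef := by
      have := (hρfpsd j).mul_mul_conjTranspose_same (Bf i)
      rwa [hBherm i] at this
    refine (re_trace_unitary_mul_le hUu hpsd).trans ?_
    rw [← hcross j i]
    rw [show Bf i * ρf j * Bf i = Bf i * (ρf j * Bf i) from by rw [mul_assoc],
      Matrix.trace_mul_comm,
      show ρf j * Bf i * Bf i = ρf j * (Bf i * Bf i) from by rw [mul_assoc],
      Matrix.trace_mul_comm]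
  have hpart1 : (∑ j, (U * (Bf j * ρf j * Bf j - ρf j)).trace.re)
      ≤ 2 * Real.sqrt δ := by
    have hb : ∀ j, (U * (Bf j * ρf j * Bf j - ρf j)).trace.re
        ≤ 2 * (Real.sqrt (dd j) * Real.sqrt (tt j)) := by
      intro j
      have := gentle hUu (hBherm j) (hρfpsd j) (hBBrho_le j) (hsq_le j) (le_refl _)
        (hdd0 j) (htt0 j)
      calc (U * (Bf j * ρf j * Bf j - ρf j)).trace.re
          ≤ 2 * Real.sqrt (dd j) * Real.sqrt (tt j) := this
        _ = 2 * (Real.sqrt (dd j) * Real.sqrt (tt j)) := by ring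
    refine (Finset.sum_le_sum fun j _ => hb j).trans ?_
    rw [← Finset.mul_sum]
    have hcs := Real.sum_sqrt_mul_sqrt_le (f := dd) (g := tt) Finset.univ hdd0 htt0
    have hs2 : Real.sqrt (∑ j, dd j) * Real.sqrt (∑ j, tt j) ≤ Real.sqrt δ := by
      rw [← hδ_eq]
      calc Real.sqrt δ * Real.sqrt (∑ j, tt j) ≤ Real.sqrt δ * 1 := by
            refine mul_le_mul_of_nonneg_left ?_ (Real.sqrt_nonneg _)
            exact Real.sqrt_le_one.mpr hT1
        _ = Real.sqrt δ := mul_one _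
    have := (hcs.trans hs2)
    linarith [this]
  linarith [hpart1, hpart2]


end

end MIP
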